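/- If the covering radius of PRS(q+1,k) equals q-k+1, then there exists an MDS code of length q+2 and dimension k+1 over F_q. -/

import Mathlib

open Polynomial

/-- Error distance of a word `u` to a code `C`: minimum Hamming distance to a codeword. -/
noncomputable def errDist {ι F : Type*} [Fintype ι] [DecidableEq F]
    (C : Set (ι → F)) (u : ι → F) : ℕ :=
  sInf (hammingDist u '' C)

/-- Covering radius of a code: maximum error distance over all words. -/
noncomputable def covRad {ι F : Type*} [Fintype ι] [DecidableEq F]
    (C : Set (ι → F)) : ℕ :=
  sSup (Set.range (errDist C))

/-- Minimum distance of a code: minimum Hamming weight of a nonzero codeword. -/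
noncomputable def minDist {ι F : Type*} [Fintype ι] [DecidableEq F] [Zero F]
    (C : Set (ι → F)) : ℕ :=
  sInf (hammingNorm '' (C \ {0}))

/-- Reed-Solomon code: evaluations of polynomials of degree `< k` at the points `x i`. -/
def RSCode (F : Type*) [Field F] {ι : Type*} (x : ι → F) (k : ℕ) : Set (ι → F) :=
  {u | ∃ f : F[X], f.degree < (k : WithBot ℕ) ∧ ∀ i, u i = f.eval (x i)}

/-- Projective Reed-Solomon code of length `q+1` (words indexed by `Option F`,
with `none` the point at infinity carrying the coefficient of `X^(k-1)`). -/
def PRSCode (F : Type*) [Field F] (k : ℕ) : Set (Option F → F) :=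
  {w | ∃ g : F[X], g.degree < (k : WithBot ℕ) ∧
    (∀ a : F, w (some a) = g.eval a) ∧ w none = g.coeff (k - 1)}

section MyAux

variable {F : Type*} [Field F] [Fintype F] [DecidableEq F]

private lemma myFilterOption {γ : Type*} [Fintype γ] (p : Option γ → Prop) [DecidablePred p] :
    (Finset.univ.filter p).card
      = (if p none then 1 else 0) + (Finset.univ.filter fun x => p (some x)).card := by
  rw [Finset.card_filter, Finset.card_filter, Fintype.sum_option]

private lemma myPrsZeros {k : ℕ} (hk2 : 2 ≤ k) {g : F[X]} (hg : g ≠ 0)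
    (hdeg : g.degree < (k : WithBot ℕ)) :
    (if g.coeff (k - 1) = 0 then 1 else 0)
      + (Finset.univ.filter fun a : F => g.eval a = 0).card ≤ k - 1 := by
  have hnd : g.natDegree < k := (Polynomial.natDegree_lt_iff_degree_lt hg).2 hdeg
  have hz : (Finset.univ.filter fun a : F => g.eval a = 0).card ≤ g.natDegree := by
    refine le_trans (Finset.card_le_card ?_)
      ((Multiset.toFinset_card_le _).trans (Polynomial.card_roots' g))
    intro a ha
    rw [Finset.mem_filter] at ha
    rw [Multiset.mem_toFinset, Polynomial.mem_roots hg]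
    exact ha.2
  by_cases hc : g.coeff (k - 1) = 0
  · have hne : g.natDegree ≠ k - 1 := by
      intro hnd'
      exact hg (Polynomial.leadingCoeff_eq_zero.mp
        (by rw [Polynomial.leadingCoeff, hnd']; exact hc))
    simp only [if_pos hc]
    omega
  · simp only [if_neg hc]
    omega

/-- The `(g,t) ↦ ext(prsWord g) + t • w'` linear map. -/
private noncomputable def myPhi (F : Type*) [Field F] (k : ℕ)
    (w' : Option (Option F) → F) :
    (Polynomial.degreeLT F k × F) →ₗ[F] (Option (Option F) → F) where
  toFun p := (fun o => Option.elim o 0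
      (fun x => Option.elim x ((p.1 : F[X]).coeff (k - 1))
        (fun a => (p.1 : F[X]).eval a))) + p.2 • w'
  map_add' p q := by
    funext o
    rcases o with _ | (_ | a) <;>
      simp [Pi.add_apply, Polynomial.eval_add, Polynomial.coeff_add] <;> ring
  map_smul' t p := by
    funext o
    rcases o with _ | (_ | a) <;>
      simp [Polynomial.eval_smul, Polynomial.coeff_smul, smul_eq_mul] <;> ring

private lemma myPhi_apply {k : ℕ} (w' : Option (Option F) → F)
    (g : Polynomial.degreeLT F k) (t : F) (o : Option (Option F)) :
    myPhi F k w' (g, t) o = Option.elim o 0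
      (fun x => Option.elim x ((g : F[X]).coeff (k - 1))
        (fun a => (g : F[X]).eval a)) + t * w' o := rfl

end MyAux

/-- If the covering radius of `PRS(q+1,k)` equals `q-k+1`, then there exists an MDS code
of length `q+2` and dimension `k+1` over `F_q`. -/
theorem mds_of_prs_covRad {F : Type*} [Field F] [Fintype F] [DecidableEq F] {k : ℕ}
    (hq : Odd (Fintype.card F)) (hk2 : 2 ≤ k) (hk : k ≤ Fintype.card F - 2)
    (h : covRad (PRSCode F k) = Fintype.card F - k + 1) :
    ∃ C : Submodule F (Fin (Fintype.card F + 2) → F),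
      Module.finrank F C = k + 1 ∧
      minDist (C : Set (Fin (Fintype.card F + 2) → F)) =
        (Fintype.card F + 2) - (k + 1) + 1 := by
  classical
  have hq2 : 2 ≤ Fintype.card F := Fintype.one_lt_card
  set q := Fintype.card F with hqdef
  have hkq : k + 2 ≤ q := by omega
  -- the zero word is a codeword
  have h0mem : (0 : Option F → F) ∈ PRSCode F k := by
    refine ⟨0, ?_, by simp, by simp⟩
    rw [Polynomial.degree_zero]
    exact WithBot.bot_lt_coe k
  -- error distance is bounded
  have hbdd : ∀ u : Option F → F, errDist (PRSCode F k) u ≤ q + 1 := by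
    intro u
    calc errDist (PRSCode F k) u ≤ hammingDist u 0 := Nat.sInf_le ⟨0, h0mem, rfl⟩
      _ ≤ Fintype.card (Option F) := hammingDist_le_card_fintype
      _ = q + 1 := by simp [hqdef]
  -- a deep hole w
  obtain ⟨w, hw⟩ : ∃ w, errDist (PRSCode F k) w = q - k + 1 := by
    have hmem : sSup (Set.range (errDist (PRSCode F k))) ∈
        Set.range (errDist (PRSCode F k)) :=
      Nat.sSup_mem ⟨errDist (PRSCode F k) 0, 0, rfl⟩
        ⟨q + 1, by rintro n ⟨u, rfl⟩; exact hbdd u⟩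
    rw [show sSup (Set.range (errDist (PRSCode F k))) = covRad (PRSCode F k) from rfl,
      h] at hmem
    exact hmem
  have hw' : sInf (hammingDist w '' PRSCode F k) = q - k + 1 := hw
  have hlb : ∀ c ∈ PRSCode F k, q - k + 1 ≤ hammingDist w c := fun c hc =>
    hw' ▸ Nat.sInf_le ⟨c, hc, rfl⟩
  obtain ⟨c₀, hc₀mem, hc₀⟩ : ∃ c₀ ∈ PRSCode F k, hammingDist w c₀ = q - k + 1 := by
    have hne : (hammingDist w '' PRSCode F k).Nonempty := ⟨_, 0, h0mem, rfl⟩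
    have := Nat.sInf_mem hne
    rw [hw'] at this
    obtain ⟨c₀, hmem, heq⟩ := this
    exact ⟨c₀, hmem, heq⟩
  set w' : Option (Option F) → F := fun o => Option.elim o 1 w with hw'def
  set Φ := myPhi F k w' with hΦdef
  -- injectivity of Φ
  have hΦ0 : ∀ p : Polynomial.degreeLT F k × F, Φ p = 0 → p = 0 := by
    rintro ⟨g, t⟩ hp
    have ht : t = 0 := by
      have := congrFun hp none
      rw [hΦdef, myPhi_apply] at this
      simpa [hw'def] using this
    have hev : ∀ a : F, (g : F[X]).eval a = 0 := by
      intro a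
      have := congrFun hp (some (some a))
      rw [hΦdef, myPhi_apply, ht] at this
      simpa using this
    have hg0 : (g : F[X]) = 0 := by
      rcases eq_or_ne (g : F[X]) 0 with h0 | h0
      · exact h0
      · refine Polynomial.eq_zero_of_natDegree_lt_card_of_eval_eq_zero _
          Function.injective_id (f := id) hev ?_
        have : (g : F[X]).natDegree < k :=
          (Polynomial.natDegree_lt_iff_degree_lt h0).2 (Polynomial.mem_degreeLT.mp g.2)
        simpa using lt_of_lt_of_le this (by omega)
    exact Prod.ext (Subtype.ext hg0) ht
  have hΦinj : Function.Injective Φ := LinearMap.ker_eq_bot.mp (LinearMap.ker_eq_bot'.mpr hΦ0)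
  -- weight lower bound for nonzero elements of the range of Φ
  have key : ∀ (g : Polynomial.degreeLT F k) (t : F), Φ (g, t) ≠ 0 →
      q + 2 - k ≤ hammingNorm (Φ (g, t)) := by
    intro g t hvne
    set v := Φ (g, t) with hvdef
    have hnorm : hammingNorm v = (if v none ≠ 0 then 1 else 0)
        + (Finset.univ.filter fun x : Option F => v (some x) ≠ 0).card :=
      myFilterOption (fun o => v o ≠ 0)
    rcases eq_or_ne t 0 with ht | ht
    · -- v is an extended PRS codeword
      have hvnone : v none = 0 := by
        rw [hvdef, hΦdef, myPhi_apply, ht]; simp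
      have hvsome : ∀ x : Option F, v (some x) = Option.elim x ((g : F[X]).coeff (k - 1))
          (fun a => (g : F[X]).eval a) := by
        intro x
        rw [hvdef, hΦdef, myPhi_apply, ht]; simp
      have hg0 : (g : F[X]) ≠ 0 := by
        intro h0
        apply hvne
        funext o
        rcases o with _ | x
        · simpa using hvnone
        · rw [hvsome x]; rcases x with _ | a <;> simp [h0]
      have hsplit : (Finset.univ.filter fun x : Option F => v (some x) ≠ 0).card
          + (Finset.univ.filter fun x : Option F => v (some x) = 0).card = q + 1 := by
        have h2 := Finset.card_filter_add_card_filter_not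
          (s := (Finset.univ : Finset (Option F))) (p := fun x => v (some x) = 0)
        simp only [ne_eq, Finset.card_univ, Fintype.card_option] at h2 ⊢
        omega
      have hzeros : (Finset.univ.filter fun x : Option F => v (some x) = 0).card ≤ k - 1 := by
        have hc : (Finset.univ.filter fun x : Option F => v (some x) = 0).card
            = (if (g : F[X]).coeff (k - 1) = 0 then 1 else 0)
              + (Finset.univ.filter fun a : F => (g : F[X]).eval a = 0).card := by
          rw [myFilterOption (fun x : Option F => v (some x) = 0)]
          congr 1
          · rw [hvsome none]
            simp
            congr
          · congr 1
            refine Finset.filter_congr fun a _ => ?_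
            rw [hvsome (some a)]
            simp
        rw [hc]
        exact myPrsZeros hk2 hg0 (Polynomial.mem_degreeLT.mp g.2)
      rw [hnorm, hvnone]
      simp only [ne_eq, not_true_eq_false, if_false]
      simp only [ne_eq] at hsplit
      omega
    · -- t ≠ 0 : shifted deep hole
      have hvnone : v none = t := by
        rw [hvdef, hΦdef, myPhi_apply]; simp [hw'def]
      set g₂ : F[X] := (-t⁻¹) • (g : F[X]) with hg₂def
      set c₂ : Option F → F := fun x => Option.elim x (g₂.coeff (k - 1))
        (fun a => g₂.eval a) with hc₂def
      have hc₂mem : c₂ ∈ PRSCode F k := by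
        refine ⟨g₂, ?_, fun a => rfl, rfl⟩
        exact lt_of_le_of_lt (Polynomial.degree_smul_le _ _)
          (Polynomial.mem_degreeLT.mp g.2)
      have hc₂x : ∀ x : Option F, c₂ x = -t⁻¹ * Option.elim x ((g : F[X]).coeff (k - 1))
          (fun a => (g : F[X]).eval a) := by
        intro x
        rcases x with _ | a <;>
          simp [hc₂def, hg₂def, Polynomial.coeff_smul, Polynomial.eval_smul, smul_eq_mul]
      have hiff : ∀ x : Option F, (v (some x) ≠ 0) ↔ (w x ≠ c₂ x) := by
        intro x
        rw [not_iff_not]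
        set cwx := Option.elim x ((g : F[X]).coeff (k - 1)) (fun a => (g : F[X]).eval a)
          with hcwx
        have hvx : v (some x) = cwx + t * w x := by
          rw [hvdef, hΦdef, myPhi_apply]; rfl
        rw [hvx, hc₂x x, ← hcwx, show -t⁻¹ * cwx = -cwx / t by field_simp,
          eq_div_iff ht]
        constructor <;> intro hh <;> linear_combination hh
      have hcard : (Finset.univ.filter fun x : Option F => v (some x) ≠ 0).card
          = hammingDist w c₂ := by
        show _ = (Finset.univ.filter fun i => w i ≠ c₂ i).card
        congr 1
        exact Finset.filter_congr fun x _ => (hiff x)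
      rw [hnorm, hvnone, hcard, if_pos ht]
      have := hlb c₂ hc₂mem
      omega
  -- the witness of minimum weight
  have hg₀mem : -Classical.choose hc₀mem ∈ Polynomial.degreeLT F k := by
    rw [Polynomial.mem_degreeLT, Polynomial.degree_neg]
    exact (Classical.choose_spec hc₀mem).1
  obtain ⟨g₀, hdeg₀, hev₀, hinf₀⟩ := hc₀mem
  have hng₀ : -g₀ ∈ Polynomial.degreeLT F k := by
    rw [Polynomial.mem_degreeLT, Polynomial.degree_neg]; exact hdeg₀
  set v₀ := Φ (⟨-g₀, hng₀⟩, 1) with hv₀def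
  have hv₀none : v₀ none = 1 := by
    rw [hv₀def, hΦdef, myPhi_apply]; simp [hw'def]
  have hv₀ne : v₀ ≠ 0 := fun h0 => by
    have := congrFun h0 none
    rw [hv₀none] at this
    exact one_ne_zero this
  have hv₀some : ∀ x : Option F, v₀ (some x) = w x - c₀ x := by
    intro x
    have : v₀ (some x) = Option.elim x ((-g₀ : F[X]).coeff (k - 1))
        (fun a => (-g₀ : F[X]).eval a) + 1 * w' (some x) := by
      rw [hv₀def, hΦdef, myPhi_apply]; simp
    rw [this]
    rcases x with _ | a
    · simp [hw'def, hinf₀]; ring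
    · simp [hw'def, hev₀ a]; ring
  have hv₀norm : hammingNorm v₀ = q + 2 - k := by
    show (Finset.univ.filter fun o => v₀ o ≠ 0).card = q + 2 - k
    rw [myFilterOption (fun o => v₀ o ≠ 0)]
    rw [show ((if v₀ none ≠ 0 then 1 else 0) = 1) by rw [hv₀none]; simp]
    have hcard : (Finset.univ.filter fun x : Option F => v₀ (some x) ≠ 0).card
        = hammingDist w c₀ := by
      show _ = (Finset.univ.filter fun i => w i ≠ c₀ i).card
      congr 1
      refine Finset.filter_congr fun x _ => ?_
      rw [hv₀some x, sub_ne_zero]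
    rw [hcard, hc₀]
    omega
  -- assemble the code of length q+2
  let e : Fin (q + 2) ≃ Option (Option F) := Fintype.equivOfCardEq (by simp [hqdef])
  let R := LinearEquiv.funCongrLeft F F e
  refine ⟨Submodule.map R.toLinearMap (LinearMap.range Φ), ?_, ?_⟩
  · rw [LinearEquiv.finrank_map_eq, LinearMap.finrank_range_of_inj hΦinj]
    haveI : Module.Finite F (Polynomial.degreeLT F k) :=
      Module.Finite.equiv (Polynomial.degreeLTEquiv F k).symm
    rw [Module.finrank_prod, (Polynomial.degreeLTEquiv F k).finrank_eq,
      Module.finrank_fin_fun, Module.finrank_self]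
  · have hRapp : ∀ (v : Option (Option F) → F) (i : Fin (q + 2)), R v i = v (e i) :=
      fun v i => rfl
    have hnormR : ∀ v : Option (Option F) → F, hammingNorm (R v) = hammingNorm v := by
      intro v
      show (Finset.univ.filter fun i => R v i ≠ 0).card
        = (Finset.univ.filter fun o => v o ≠ 0).card
      refine Finset.card_equiv e fun i => ?_
      simp [hRapp]
    have himg : ((Submodule.map R.toLinearMap (LinearMap.range Φ) : Submodule F _) : Set _)
        = R '' (LinearMap.range Φ : Set _) := rfl
    have hset : (R '' (LinearMap.range Φ : Set _)) \ {0}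
        = R '' ((LinearMap.range Φ : Set _) \ {0}) := by
      rw [Set.image_diff R.injective]
      congr 1
      rw [Set.image_singleton, map_zero]
    show sInf (hammingNorm '' _) = _
    rw [himg, hset, Set.image_image]
    simp only [hnormR]
    have harith : q + 2 - (k + 1) + 1 = q + 2 - k := by omega
    rw [harith]
    have hv₀memS : v₀ ∈ (LinearMap.range Φ : Set _) \ {0} :=
      ⟨⟨_, rfl⟩, fun h0 => hv₀ne h0⟩
    refine le_antisymm (Nat.sInf_le ⟨v₀, hv₀memS, hv₀norm⟩) (le_csInf ⟨_, v₀, hv₀memS, rfl⟩ ?_)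
    rintro n ⟨v, ⟨hvmem, hv0⟩, rfl⟩
    obtain ⟨⟨g, t⟩, rfl⟩ := hvmem
    exact key g t (by simpa using hv0)
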